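/- Let p be a prime with p ∤ q−1, let b ≥ 1 be an integer, and set n = (q^{p^b}−1)/(q^{p^{b−1}}−1) (note n is coprime to q). Then {l_i : i ∈ Z_{n,r}} = {1, p^b}, N_1 = 1, and N_{p^b} = (n−1)/p^b. In particular, gcd(n, q^{p^j}−1) = 1 for every j with 0 ≤ j ≤ b−1. -/

import Mathlib

open scoped Classical

/-- The `q`-cyclotomic coset of `i` modulo `N`, with representatives taken in `{1, …, N}`. -/
noncomputable def cosetOf (q N i : ℕ) : Finset ℕ :=
  (Finset.Icc 1 N).filter (fun x => ∃ j : ℕ, x ≡ i * q ^ j [MOD N])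

/-- `Z_{n,r} = {1 + i r : 0 ≤ i ≤ n-1}`. -/
def Zset (n r : ℕ) : Finset ℕ := (Finset.range n).image (fun i => 1 + i * r)

/-- The collection of `q`-cyclotomic cosets contained in `Z_{n,r}`. -/
noncomputable def cosetsIn (q n r : ℕ) : Finset (Finset ℕ) :=
  (Zset n r).image (fun i => cosetOf q (n * r) i)

/-- `N_l`: the number of `q`-cyclotomic cosets of size `l` contained in `Z_{n,r}`. -/
noncomputable def Ncount (q n r l : ℕ) : ℕ :=
  ((cosetsIn q n r).filter (fun C => C.card = l)).card

/-- Coset leader: the smallest element of a coset. -/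
noncomputable def leader (C : Finset ℕ) : ℕ := sInf (C : Set ℕ)

/-- The sorted (increasing) list of coset leaders of the cosets of size `l` in `Z_{n,r}`. -/
noncomputable def leaderList (q n r l : ℕ) : List ℕ :=
  Finset.sort (((cosetsIn q n r).filter (fun C => C.card = l)).image leader) (· ≤ ·)

/-- `δ_i^{(l)}`: the `i`-th smallest coset leader (1-indexed). -/
noncomputable def delta (q n r l i : ℕ) : ℕ := (leaderList q n r l).getD (i - 1) 0

lemma geom_mul (Q k : ℕ) (hQ : 1 ≤ Q) :
    (∑ i ∈ Finset.range k, Q ^ i) * (Q - 1) = Q ^ k - 1 := by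
  induction k with
  | zero => simp
  | succ k ih =>
    rw [Finset.sum_range_succ, add_mul, ih, pow_succ]
    have h1 : 1 ≤ Q ^ k := Nat.one_le_pow _ _ hQ
    have h2 : Q ^ k * (Q - 1) = Q ^ k * Q - Q ^ k := by rw [Nat.mul_sub, mul_one]
    have h3 : Q ^ k ≤ Q ^ k * Q := Nat.le_mul_of_pos_right _ hQ
    omega

/-- `m ∣ a^k - 1 ↔ (a : ZMod m)^k = 1` for `a ≥ 1`. -/
lemma dvd_pow_sub_one_iff (m a k : ℕ) (ha : 1 ≤ a) :
    m ∣ a ^ k - 1 ↔ (a : ZMod m) ^ k = 1 := by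
  have h1 : 1 ≤ a ^ k := Nat.one_le_pow _ _ ha
  rw [← Nat.modEq_iff_dvd' h1]
  constructor
  · intro h
    have := (ZMod.natCast_eq_natCast_iff 1 (a ^ k) m).mpr h
    push_cast at this
    exact this.symm
  · intro h
    have : ((1 : ℕ) : ZMod m) = ((a ^ k : ℕ) : ZMod m) := by push_cast; exact h.symm
    exact (ZMod.natCast_eq_natCast_iff _ _ _).mp this

/-- order trick: common divisor of `a^k-1` and `a^l-1` divides `a^gcd(k,l)-1`. -/
lemma dvd_pow_gcd_sub_one (m a k l : ℕ) (ha : 1 ≤ a)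
    (hk : m ∣ a ^ k - 1) (hl : m ∣ a ^ l - 1) : m ∣ a ^ Nat.gcd k l - 1 := by
  rw [dvd_pow_sub_one_iff m a _ ha] at hk hl ⊢
  exact orderOf_dvd_iff_pow_eq_one.mp
    (Nat.dvd_gcd (orderOf_dvd_of_pow_eq_one hk) (orderOf_dvd_of_pow_eq_one hl))

lemma pow_pow_sub_one_dvd (q p i j : ℕ) (hij : i ≤ j) :
    q ^ p ^ i - 1 ∣ q ^ p ^ j - 1 := by
  have he : p ^ i * p ^ (j - i) = p ^ j := by
    rw [← pow_add]; congr 1; omega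
  have : q ^ p ^ j = (q ^ p ^ i) ^ p ^ (j - i) := by rw [← pow_mul, he]
  rw [this]
  simpa using Nat.sub_dvd_pow_sub_pow (q ^ p ^ i) 1 (p ^ (j - i))

lemma coprime_pred (a : ℕ) (h : 1 ≤ a) : Nat.Coprime a (a - 1) := by
  have := (Nat.coprime_sub_self_left (Nat.sub_le a 1) (n := a)).mp
  rw [show a - (a - 1) = 1 by omega] at this
  exact (this (Nat.coprime_one_left _)).symm.symm

lemma p_not_dvd_pow (q p c : ℕ) (hp : p.Prime) (hpq : ¬ p ∣ q - 1) (hq2 : 2 ≤ q) :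
    ¬ p ∣ q ^ p ^ c - 1 := by
  intro h
  haveI := Fact.mk hp
  have hq1 : 1 ≤ q := by omega
  have hqc1 : 1 ≤ q ^ p ^ c := Nat.one_le_pow _ _ (by omega)
  have hpq' : ¬ p ∣ q := by
    intro hd
    have h1 : p ∣ q ^ p ^ c := dvd_pow hd (pow_pos hp.pos c).ne'
    have h2 := Nat.dvd_sub h1 h
    rw [show q ^ p ^ c - (q ^ p ^ c - 1) = 1 by omega] at h2
    have := Nat.dvd_one.mp h2
    have := hp.two_le
    omega
  have hz : (q : ZMod p) ≠ 0 := by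
    rw [Ne, ZMod.natCast_eq_zero_iff]; exact hpq'
  have ho1 : (q : ZMod p) ^ p ^ c = 1 := (dvd_pow_sub_one_iff p q _ hq1).mp h
  have ht1 : orderOf (q : ZMod p) ∣ p ^ c := orderOf_dvd_of_pow_eq_one ho1
  have ht2 : orderOf (q : ZMod p) ∣ p - 1 :=
    orderOf_dvd_of_pow_eq_one (ZMod.pow_card_sub_one_eq_one hz)
  obtain ⟨j, hj, hje⟩ := (Nat.dvd_prime_pow hp).mp ht1
  rcases Nat.eq_zero_or_pos j with hj0 | hj0
  · rw [hj0, pow_zero] at hje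
    have h1 : (q : ZMod p) = 1 := orderOf_eq_one_iff.mp hje
    apply hpq
    have : (q : ZMod p) ^ 1 = 1 := by rwa [pow_one]
    have := (dvd_pow_sub_one_iff p q 1 hq1).mpr this
    rwa [pow_one] at this
  · have hpd : p ∣ p - 1 := dvd_trans (dvd_pow_self p hj0.ne') (hje ▸ ht2)
    have h2 := hp.two_le
    have h1 := Nat.le_of_dvd (by omega) hpd
    omega

lemma modeq_sum {ι : Type*} (s : Finset ι) (f g : ι → ℕ) (m : ℕ)
    (h : ∀ i ∈ s, f i ≡ g i [MOD m]) : (∑ i ∈ s, f i) ≡ (∑ i ∈ s, g i) [MOD m] := by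
  classical
  induction s using Finset.cons_induction with
  | empty => rfl
  | cons a s ha ih =>
    rw [Finset.sum_cons, Finset.sum_cons]
    exact (h a (Finset.mem_cons_self a s)).add (ih fun i hi => h i (Finset.mem_cons_of_mem hi))

def repU (N z : ℕ) : ℕ := if z % N = 0 then N else z % N

lemma repU_mem (N z : ℕ) (hN : 0 < N) : repU N z ∈ Finset.Icc 1 N := by
  simp only [Finset.mem_Icc, repU]
  split
  · omega
  · have := Nat.mod_lt z hN
    omega

lemma repU_modeq (N z : ℕ) : repU N z ≡ z [MOD N] := by
  unfold repU Nat.ModEq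
  split
  · next h => rw [Nat.mod_self, h]
  · exact Nat.mod_mod_of_dvd z dvd_rfl

lemma rep_unique (M a c : ℕ) (ha : a ∈ Finset.Icc 1 M) (hc : c ∈ Finset.Icc 1 M)
    (h : a ≡ c [MOD M]) : a = c := by
  simp only [Finset.mem_Icc] at ha hc
  rcases le_total a c with hle | hle
  · have h2 := (Nat.modEq_iff_dvd' hle).mp h
    rcases Nat.eq_zero_or_pos (c - a) with h0 | h0
    · omega
    · have := Nat.le_of_dvd h0 h2
      omega
  · have h2 := (Nat.modEq_iff_dvd' hle).mp h.symm
    rcases Nat.eq_zero_or_pos (a - c) with h0 | h0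
    · omega
    · have := Nat.le_of_dvd h0 h2
      omega

theorem stmt16 (q r p b n : ℕ) (hq : IsPrimePow q) (hr : 0 < r) (hrdvd : r ∣ q - 1)
    (hp : p.Prime) (hpq : ¬ p ∣ q - 1) (hb : 1 ≤ b)
    (hn : n = (q ^ p ^ b - 1) / (q ^ p ^ (b - 1) - 1)) :
    (Zset n r).image (fun i => (cosetOf q (n * r) i).card) = {1, p ^ b} ∧
    Ncount q n r 1 = 1 ∧
    Ncount q n r (p ^ b) = (n - 1) / p ^ b ∧
    (∀ j < b, Nat.gcd n (q ^ p ^ j - 1) = 1) := by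
  have hq2 : 2 ≤ q := hq.two_le
  set K := p ^ b with hK
  set Q := q ^ p ^ (b - 1) with hQdef
  have hpe : 1 ≤ p ^ (b - 1) := Nat.one_le_pow _ _ hp.pos
  have hQ2 : 2 ≤ Q := le_trans hq2 (Nat.le_self_pow (by omega) q)
  have hbe : b - 1 + 1 = b := by omega
  have hpow : q ^ K = Q ^ p := by
    rw [hK, hQdef, ← pow_mul, ← pow_succ, hbe]
  have hnsum : n = ∑ i ∈ Finset.range p, Q ^ i := by
    have hg := geom_mul Q p (by omega)
    rw [hn, hpow, ← hg, Nat.mul_div_cancel _ (by omega : 0 < Q - 1)]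
  have hnp : p ≤ n := by
    rw [hnsum]
    calc p = ∑ _i ∈ Finset.range p, 1 := by simp
    _ ≤ ∑ i ∈ Finset.range p, Q ^ i :=
      Finset.sum_le_sum (fun i _ => Nat.one_le_pow _ _ (by omega))
  have hn2 : 1 + Q ≤ n := by
    rw [hnsum]
    calc 1 + Q = ∑ i ∈ Finset.range 2, Q ^ i := by
          rw [Finset.sum_range_succ, Finset.sum_range_one, pow_zero, pow_one]
    _ ≤ ∑ i ∈ Finset.range p, Q ^ i :=
      Finset.sum_le_sum_of_subset (Finset.range_subset_range.mpr hp.two_le)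
  have hp_not : ¬ p ∣ Q - 1 := p_not_dvd_pow q p (b - 1) hp hpq hq2
  have hnmodp : n ≡ p [MOD Q - 1] := by
    rw [hnsum]
    calc (∑ i ∈ Finset.range p, Q ^ i) ≡ ∑ _i ∈ Finset.range p, 1 [MOD Q - 1] := by
          apply modeq_sum
          intro i _
          have hQm : Q ≡ 1 [MOD Q - 1] := ((Nat.modEq_iff_dvd' (by omega)).mpr dvd_rfl).symm
          simpa using hQm.pow i
    _ = p := by simp
  have hnQ : Nat.gcd n (Q - 1) = 1 := by
    by_contra hg
    have hg1 : Nat.gcd n (Q - 1) ∣ n := Nat.gcd_dvd_left _ _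
    have hg2 : Nat.gcd n (Q - 1) ∣ Q - 1 := Nat.gcd_dvd_right _ _
    have hmod : n ≡ p [MOD Nat.gcd n (Q - 1)] := hnmodp.of_dvd hg2
    have hdvd : Nat.gcd n (Q - 1) ∣ n - p := (Nat.modEq_iff_dvd' hnp).mp hmod.symm
    have hdp : Nat.gcd n (Q - 1) ∣ p := by
      have := Nat.dvd_sub hg1 hdvd
      rwa [show n - (n - p) = p by omega] at this
    rcases (Nat.Prime.eq_one_or_self_of_dvd hp _ hdp) with h1 | h1
    · exact hg h1
    · exact hp_not (h1 ▸ hg2)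
  have part4 : ∀ j < b, Nat.gcd n (q ^ p ^ j - 1) = 1 := by
    intro j hj
    have hdQ : q ^ p ^ j - 1 ∣ Q - 1 := pow_pow_sub_one_dvd q p j (b - 1) (by omega)
    have hh : Nat.gcd n (q ^ p ^ j - 1) ∣ Nat.gcd n (Q - 1) :=
      Nat.dvd_gcd (Nat.gcd_dvd_left _ _) ((Nat.gcd_dvd_right _ _).trans hdQ)
    rw [hnQ] at hh
    exact Nat.dvd_one.mp hh
  -- coprimality facts
  have hgr : Nat.Coprime n r := by
    have h0 := part4 0 hb
    rw [pow_zero, pow_one] at h0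
    exact Nat.Coprime.coprime_dvd_right hrdvd h0
  have hprod : n * (Q - 1) = q ^ K - 1 := by
    rw [hnsum, geom_mul Q p (by omega), hpow]
  have hdvd_nK : n ∣ q ^ K - 1 := ⟨Q - 1, hprod.symm⟩
  have hrK : r ∣ q ^ K - 1 :=
    hrdvd.trans (by simpa using Nat.sub_dvd_pow_sub_pow q 1 K)
  have hNK : n * r ∣ q ^ K - 1 := Nat.Coprime.mul_dvd_of_dvd_of_dvd hgr hdvd_nK hrK
  have hKpos : 0 < K := pow_pos hp.pos b
  have hK2 : 2 ≤ K := Nat.one_lt_pow (by omega) hp.one_lt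
  have hNpos : 0 < n * r := Nat.mul_pos (by omega) hr
  have hqn : Nat.Coprime q n := by
    have c1 : Nat.Coprime (q ^ K) (q ^ K - 1) :=
      coprime_pred _ (Nat.one_le_pow _ _ (by omega))
    have c2 : Nat.Coprime q (q ^ K - 1) :=
      Nat.Coprime.coprime_dvd_left (dvd_pow_self q hKpos.ne') c1
    exact Nat.Coprime.coprime_dvd_right hdvd_nK c2
  have hqr' : Nat.Coprime q r :=
    Nat.Coprime.coprime_dvd_right hrdvd (coprime_pred q (by omega))
  have hqN : Nat.Coprime q (n * r) := Nat.Coprime.mul_right hqn hqr'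
  have hqKmod : q ^ K ≡ 1 [MOD n * r] :=
    ((Nat.modEq_iff_dvd' (Nat.one_le_pow _ _ (by omega))).mpr hNK).symm
  -- THE KEY LEMMA
  have key : ∀ x l : ℕ, 0 < x → 0 < l → l < K → n * r ∣ x * (q ^ l - 1) → n ∣ x := by
    intro x l hx hl hlK hdvd
    have hrl : r ∣ q ^ l - 1 := hrdvd.trans (by simpa using Nat.sub_dvd_pow_sub_pow q 1 l)
    obtain ⟨s, hs⟩ := hrl
    have hns : n ∣ x * s := by
      have h1 := hdvd
      rw [hs, show x * (r * s) = x * s * r by ring] at h1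
      exact (Nat.mul_dvd_mul_iff_right hr).mp h1
    set d := Nat.gcd x n with hd
    have hdpos : 0 < d := Nat.gcd_pos_of_pos_left n hx
    have hdx : d ∣ x := Nat.gcd_dvd_left _ _
    have hdn : d ∣ n := Nat.gcd_dvd_right _ _
    set m := n / d with hm
    have hmd : d * m = n := Nat.mul_div_cancel' hdn
    have hmn : m ∣ n := ⟨d, by rw [← hmd]; ring⟩
    have hms : m ∣ x / d * s := by
      have hx' : x = d * (x / d) := (Nat.mul_div_cancel' hdx).symm
      have h2 : d * m ∣ d * (x / d * s) := by
        rw [hmd, ← mul_assoc, ← hx']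
        exact hns
      exact (mul_dvd_mul_iff_left (show (d : ℕ) ≠ 0 by omega)).mp h2
    have hcop : Nat.Coprime m (x / d) := (Nat.coprime_div_gcd_div_gcd (hd ▸ hdpos)).symm
    have hmsdvd : m ∣ s := hcop.dvd_of_dvd_mul_left hms
    have hml : m ∣ q ^ l - 1 := hmsdvd.trans ⟨r, by rw [hs]; ring⟩
    have hmK : m ∣ q ^ K - 1 := hmn.trans hdvd_nK
    have hg := dvd_pow_gcd_sub_one m q l K (by omega) hml hmK
    have hgK : Nat.gcd l K ∣ K := Nat.gcd_dvd_right _ _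
    obtain ⟨j, hjb, hje⟩ := (Nat.dvd_prime_pow hp).mp hgK
    have hgl : Nat.gcd l K ≤ l := Nat.le_of_dvd hl (Nat.gcd_dvd_left _ _)
    have hjb' : j ≤ b - 1 := by
      by_contra hc
      have hjeq : j = b := by omega
      rw [hjeq, ← hK] at hje
      omega
    have hgQ : q ^ Nat.gcd l K - 1 ∣ Q - 1 := by
      rw [hje, hQdef]
      exact pow_pow_sub_one_dvd q p j (b - 1) hjb'
    have hm1 : m ∣ 1 := by
      rw [← hnQ]
      exact Nat.dvd_gcd hmn (hg.trans hgQ)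
    have hmone : m = 1 := Nat.dvd_one.mp hm1
    have hnd : n = d := by rw [← hmd, hmone, mul_one]
    exact hnd ▸ hdx
  have keyrev : ∀ x j : ℕ, n ∣ x → n * r ∣ x * (q ^ j - 1) := by
    intro x j hx
    have hrj : r ∣ q ^ j - 1 := hrdvd.trans (by simpa using Nat.sub_dvd_pow_sub_pow q 1 j)
    exact mul_dvd_mul hx hrj
  -- Zset membership facts
  have hZ_sub : ∀ x ∈ Zset n r, 1 ≤ x ∧ x ≤ n * r ∧ x ≡ 1 [MOD r] := by
    intro x hx
    obtain ⟨i, hi, rfl⟩ := Finset.mem_image.mp hx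
    rw [Finset.mem_range] at hi
    have h2 : i * r + r ≤ n * r := by
      have := Nat.mul_le_mul_right r (show i + 1 ≤ n by omega)
      rwa [add_mul, one_mul] at this
    refine ⟨by omega, by omega, ?_⟩
    exact ((Nat.modEq_iff_dvd' (by omega)).mpr ⟨i, by rw [Nat.add_sub_cancel_left, mul_comm]⟩).symm
  have hZ_mem_of : ∀ y, 1 ≤ y → y ≤ n * r → y ≡ 1 [MOD r] → y ∈ Zset n r := by
    intro y h1 h2 h3
    obtain ⟨i, hi⟩ := (Nat.modEq_iff_dvd' h1).mp h3.symm
    rw [mul_comm] at hi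
    have hylt : i < n := by
      by_contra hc
      have : n * r ≤ i * r := Nat.mul_le_mul_right r (by omega)
      omega
    apply Finset.mem_image.mpr
    exact ⟨i, Finset.mem_range.mpr hylt, by omega⟩
  have hcoset_mem : ∀ x y, y ∈ cosetOf q (n * r) x ↔
      (y ∈ Finset.Icc 1 (n * r) ∧ ∃ j, y ≡ x * q ^ j [MOD n * r]) := by
    intro x y
    simp [cosetOf]
  have hIccZ : ∀ x ∈ Zset n r, x ∈ Finset.Icc 1 (n * r) := by
    intro x hx
    obtain ⟨h1, h2, _⟩ := hZ_sub x hx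
    exact Finset.mem_Icc.mpr ⟨h1, h2⟩
  have hself : ∀ x ∈ Zset n r, x ∈ cosetOf q (n * r) x := by
    intro x hx
    rw [hcoset_mem]
    exact ⟨hIccZ x hx, 0, by simpa using Nat.ModEq.refl x⟩
  have hsubZ : ∀ x ∈ Zset n r, cosetOf q (n * r) x ⊆ Zset n r := by
    intro x hx y hy
    rw [hcoset_mem] at hy
    obtain ⟨hIcc, j, hj⟩ := hy
    rw [Finset.mem_Icc] at hIcc
    have hqr1 : q ≡ 1 [MOD r] := ((Nat.modEq_iff_dvd' (by omega)).mpr hrdvd).symm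
    have hx1 : x ≡ 1 [MOD r] := (hZ_sub x hx).2.2
    have hmul : x * q ^ j ≡ 1 [MOD r] := by
      calc x * q ^ j ≡ 1 * 1 ^ j [MOD r] := hx1.mul (hqr1.pow j)
      _ = 1 := by ring
    have hyr : y ≡ 1 [MOD r] := (hj.of_dvd (dvd_mul_left r n)).trans hmul
    exact hZ_mem_of y hIcc.1 hIcc.2 hyr
  have hshift : ∀ x x' j, x' ≡ x * q ^ j [MOD n * r] →
      cosetOf q (n * r) x' = cosetOf q (n * r) x := by
    intro x x' j h
    apply Finset.ext
    intro z
    rw [hcoset_mem, hcoset_mem]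
    constructor
    · rintro ⟨hz, i, hi⟩
      refine ⟨hz, j + i, ?_⟩
      calc z ≡ x' * q ^ i [MOD n * r] := hi
      _ ≡ x * q ^ j * q ^ i [MOD n * r] := h.mul_right _
      _ = x * q ^ (j + i) := by rw [pow_add]; ring
    · rintro ⟨hz, i, hi⟩
      refine ⟨hz, (K - j % K) + i, ?_⟩
      have ht : j + (K - j % K) = K * (j / K + 1) := by
        rw [Nat.mul_add, Nat.mul_one]
        have h1 := Nat.div_add_mod j K
        have h2 := Nat.mod_lt j hKpos
        omega
      have hq1 : q ^ (j + (K - j % K)) ≡ 1 [MOD n * r] := by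
        rw [ht, pow_mul]
        simpa using hqKmod.pow (j / K + 1)
      have hstep : x' * q ^ (K - j % K) ≡ x [MOD n * r] := by
        calc x' * q ^ (K - j % K) ≡ x * q ^ j * q ^ (K - j % K) [MOD n * r] := h.mul_right _
        _ = x * q ^ (j + (K - j % K)) := by rw [pow_add]; ring
        _ ≡ x * 1 [MOD n * r] := hq1.mul_left x
        _ = x := by ring
      calc z ≡ x * q ^ i [MOD n * r] := hi
      _ ≡ x' * q ^ (K - j % K) * q ^ i [MOD n * r] := (hstep.mul_right _).symm
      _ = x' * q ^ (K - j % K + i) := by rw [pow_add]; ring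
  have hinter : ∀ x x' y, y ∈ cosetOf q (n * r) x → y ∈ cosetOf q (n * r) x' →
      cosetOf q (n * r) x = cosetOf q (n * r) x' := by
    intro x x' y h1 h2
    rw [hcoset_mem] at h1 h2
    obtain ⟨_, j1, hj1⟩ := h1
    obtain ⟨_, j2, hj2⟩ := h2
    rw [← hshift x y j1 hj1, hshift x' y j2 hj2]
  -- card computations
  have hcard1 : ∀ x ∈ Zset n r, n ∣ x → cosetOf q (n * r) x = {x} := by
    intro x hx hnx
    obtain ⟨hx1, hx2, _⟩ := hZ_sub x hx
    apply Finset.ext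
    intro y
    rw [hcoset_mem, Finset.mem_singleton]
    constructor
    · rintro ⟨hIcc, j, hj⟩
      have hconst : x * q ^ j ≡ x [MOD n * r] := by
        have hd := keyrev x j hnx
        have hxle : x ≤ x * q ^ j := Nat.le_mul_of_pos_right x (pow_pos (by omega) j)
        have heq : x * q ^ j - x = x * (q ^ j - 1) := by
          rw [Nat.mul_sub, mul_one]
        exact ((Nat.modEq_iff_dvd' hxle).mpr (heq ▸ hd)).symm
      exact rep_unique (n * r) y x hIcc (hIccZ x hx) (hj.trans hconst)
    · rintro rfl
      exact ⟨hIccZ _ hx, 0, by simpa using Nat.ModEq.refl _⟩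
  have hcardK : ∀ x ∈ Zset n r, ¬ n ∣ x → (cosetOf q (n * r) x).card = K := by
    intro x hx hnx
    obtain ⟨hx1, hx2, _⟩ := hZ_sub x hx
    have himg : cosetOf q (n * r) x =
        Finset.image (fun j => repU (n * r) (x * q ^ j)) (Finset.range K) := by
      apply Finset.ext
      intro y
      rw [hcoset_mem]
      simp only [Finset.mem_image, Finset.mem_range]
      constructor
      · rintro ⟨hIcc, j, hj⟩
        refine ⟨j % K, Nat.mod_lt j hKpos, ?_⟩
        have h1 : (q ^ K) ^ (j / K) ≡ 1 [MOD n * r] := by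
          simpa using hqKmod.pow (j / K)
        have hjj : x * q ^ j ≡ x * q ^ (j % K) [MOD n * r] := by
          calc x * q ^ j = x * (q ^ K) ^ (j / K) * q ^ (j % K) := by
                rw [mul_assoc, ← pow_mul, ← pow_add, Nat.div_add_mod]
          _ ≡ x * 1 * q ^ (j % K) [MOD n * r] := (h1.mul_left x).mul_right _
          _ = x * q ^ (j % K) := by ring
        exact (rep_unique (n * r) y _ hIcc (repU_mem _ _ hNpos)
          ((hj.trans hjj).trans (repU_modeq _ _).symm)).symm
      · rintro ⟨j, hjK, rfl⟩
        exact ⟨repU_mem _ _ hNpos, j, repU_modeq _ _⟩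
    rw [himg, Finset.card_image_of_injOn, Finset.card_range]
    intro j1 h1 j2 h2 heq
    simp only [Finset.mem_coe, Finset.mem_range] at h1 h2
    have heq' : repU (n * r) (x * q ^ j1) = repU (n * r) (x * q ^ j2) := heq
    have hcong : x * q ^ j1 ≡ x * q ^ j2 [MOD n * r] := by
      have e1 := repU_modeq (n * r) (x * q ^ j1)
      have e2 := repU_modeq (n * r) (x * q ^ j2)
      rw [heq'] at e1
      exact e1.symm.trans e2
    by_contra hne
    have main : ∀ a c, a < c → c < K → x * q ^ a ≡ x * q ^ c [MOD n * r] → False := by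
      intro a c hac hcK hcong'
      have hca : a + (c - a) = c := by omega
      have hrw1 : q ^ a * (x * q ^ (c - a)) = x * q ^ c := by
        rw [show x * q ^ c = x * q ^ (a + (c - a)) by rw [hca], pow_add]; ring
      have hrw2 : q ^ a * (x * 1) = x * q ^ a := by ring
      have hcanc : x * q ^ (c - a) ≡ x * 1 [MOD n * r] := by
        apply Nat.ModEq.cancel_left_of_coprime
          (((Nat.Coprime.pow_left a hqN).symm : Nat.Coprime (n * r) (q ^ a)))
        rw [hrw1, hrw2]
        exact hcong'.symm
      rw [mul_one] at hcanc
      have hxle : x ≤ x * q ^ (c - a) := Nat.le_mul_of_pos_right x (pow_pos (by omega) _)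
      have hdd : n * r ∣ x * (q ^ (c - a) - 1) := by
        have := (Nat.modEq_iff_dvd' hxle).mp hcanc.symm
        rwa [show x * q ^ (c - a) - x = x * (q ^ (c - a) - 1) by
          rw [Nat.mul_sub, mul_one]] at this
      exact hnx (key x (c - a) (by omega) (by omega) (by omega) hdd)
    rcases lt_trichotomy j1 j2 with h | h | h
    · exact main j1 j2 h h2 hcong
    · exact hne h
    · exact main j2 j1 h h1 hcong.symm
  -- the special element x0 with n ∣ x0
  haveI : NeZero n := ⟨by omega⟩
  obtain ⟨x0, hx0mem, hx0dvd⟩ : ∃ x0 ∈ Zset n r, n ∣ x0 := by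
    set u := ZMod.unitOfCoprime r hgr.symm with hu
    set c : ZMod n := -((u⁻¹ : (ZMod n)ˣ) : ZMod n) with hc
    refine ⟨1 + c.val * r, Finset.mem_image.mpr ⟨c.val, Finset.mem_range.mpr (ZMod.val_lt c), rfl⟩, ?_⟩
    rw [← ZMod.natCast_eq_zero_iff]
    push_cast
    rw [ZMod.natCast_zmod_val, ← ZMod.coe_unitOfCoprime r hgr.symm, ← hu, hc]
    rw [neg_mul, Units.inv_mul]
    simp
  have hone_mem : 1 ∈ Zset n r :=
    Finset.mem_image.mpr ⟨0, Finset.mem_range.mpr (by omega), by simp⟩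
  have hone_ndvd : ¬ n ∣ 1 := fun h => by
    have := Nat.le_of_dvd one_pos h
    omega
  have hx0uniq : ∀ x ∈ Zset n r, n ∣ x → x = x0 := by
    intro x hx hnx
    obtain ⟨ha1, ha2, ha3⟩ := hZ_sub x hx
    obtain ⟨hb1, hb2, hb3⟩ := hZ_sub x0 hx0mem
    have h1 : x ≡ x0 [MOD n] := by
      unfold Nat.ModEq
      rw [Nat.mod_eq_zero_of_dvd hnx, Nat.mod_eq_zero_of_dvd hx0dvd]
    have h2 : x ≡ x0 [MOD r] := ha3.trans hb3.symm
    have h3 : x ≡ x0 [MOD n * r] := (Nat.modEq_and_modEq_iff_modEq_mul hgr).mp ⟨h1, h2⟩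
    exact rep_unique (n * r) x x0 (hIccZ x hx) (hIccZ x0 hx0mem) h3
  -- membership in cosetsIn
  have hmemC : ∀ C, C ∈ cosetsIn q n r ↔ ∃ x ∈ Zset n r, C = cosetOf q (n * r) x := by
    intro C
    constructor
    · intro hC
      obtain ⟨x, hx, rfl⟩ := Finset.mem_image.mp hC
      exact ⟨x, hx, rfl⟩
    · rintro ⟨x, hx, rfl⟩
      exact Finset.mem_image_of_mem _ hx
  have hcardZ : (Zset n r).card = n := by
    rw [Zset, Finset.card_image_of_injOn, Finset.card_range]
    intro a _ c _ h
    simp only [] at h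
    have h2 : a * r = c * r := by omega
    exact Nat.eq_of_mul_eq_mul_right hr h2
  have hdisj' : ∀ C ∈ cosetsIn q n r, ∀ C' ∈ cosetsIn q n r, C ≠ C' → Disjoint C C' := by
    intro C hC C' hC' hne
    rw [Finset.disjoint_left]
    intro a haC haC'
    obtain ⟨x, hx, rfl⟩ := (hmemC C).mp hC
    obtain ⟨x', hx', rfl⟩ := (hmemC C').mp hC'
    exact hne (hinter x x' a haC haC')
  have hbiun : (cosetsIn q n r).biUnion (fun C => C) = Zset n r := by
    apply Finset.ext
    intro y
    simp only [Finset.mem_biUnion]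
    constructor
    · rintro ⟨C, hC, hyC⟩
      obtain ⟨x, hx, rfl⟩ := (hmemC C).mp hC
      exact hsubZ x hx hyC
    · intro hy
      exact ⟨cosetOf q (n * r) y, (hmemC _).mpr ⟨y, hy, rfl⟩, hself y hy⟩
  have hsum : ∑ C ∈ cosetsIn q n r, C.card = n := by
    have h := Finset.card_biUnion hdisj'
    rw [hbiun, hcardZ] at h
    exact h.symm
  have goal1 : (Zset n r).image (fun i => (cosetOf q (n * r) i).card) = {1, K} := by
    apply Finset.ext
    intro z
    simp only [Finset.mem_image, Finset.mem_insert, Finset.mem_singleton]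
    constructor
    · rintro ⟨x, hx, rfl⟩
      by_cases hnx : n ∣ x
      · left; rw [hcard1 x hx hnx]; simp
      · right; exact hcardK x hx hnx
    · rintro (rfl | rfl)
      · exact ⟨x0, hx0mem, by rw [hcard1 x0 hx0mem hx0dvd]; simp⟩
      · exact ⟨1, hone_mem, hcardK 1 hone_mem hone_ndvd⟩
  have hfilter1 : (cosetsIn q n r).filter (fun C => C.card = 1) = {cosetOf q (n * r) x0} := by
    apply Finset.ext
    intro C
    simp only [Finset.mem_filter, Finset.mem_singleton]
    constructor
    · rintro ⟨hC, hc1⟩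
      obtain ⟨x, hx, rfl⟩ := (hmemC C).mp hC
      by_cases hnx : n ∣ x
      · rw [hx0uniq x hx hnx]
      · rw [hcardK x hx hnx] at hc1; omega
    · rintro rfl
      exact ⟨(hmemC _).mpr ⟨x0, hx0mem, rfl⟩, by rw [hcard1 x0 hx0mem hx0dvd]; simp⟩
  have goal2 : Ncount q n r 1 = 1 := by
    rw [Ncount, hfilter1, Finset.card_singleton]
  have hfiltK : (cosetsIn q n r).filter (fun C => ¬ C.card = 1) =
      (cosetsIn q n r).filter (fun C => C.card = K) := by
    apply Finset.filter_congr
    intro C hC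
    obtain ⟨x, hx, rfl⟩ := (hmemC C).mp hC
    by_cases hnx : n ∣ x
    · rw [hcard1 x hx hnx]
      simp only [Finset.card_singleton]
      have hne1 : (1 : ℕ) ≠ K := by omega
      constructor
      · intro h; exact absurd trivial h
      · intro h; exact fun _ => hne1 h
    · rw [hcardK x hx hnx]
      constructor
      · intro _; rfl
      · intro _; omega
  have hsplit := Finset.sum_filter_add_sum_filter_not (cosetsIn q n r)
    (fun C => C.card = 1) (fun C => C.card)
  rw [hsum, hfilter1, hfiltK] at hsplit
  rw [Finset.sum_singleton, hcard1 x0 hx0mem hx0dvd, Finset.card_singleton] at hsplit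
  have hKsum : ∑ C ∈ (cosetsIn q n r).filter (fun C => C.card = K), C.card
      = Ncount q n r K * K := by
    rw [Finset.sum_congr rfl (fun C hC => (Finset.mem_filter.mp hC).2), Finset.sum_const,
      smul_eq_mul, Ncount]
  rw [hKsum] at hsplit
  have goal3 : Ncount q n r K = (n - 1) / K := by
    have h1 : n - 1 = Ncount q n r K * K := by omega
    rw [h1, Nat.mul_div_cancel _ (by omega : 0 < K)]
  exact ⟨goal1, goal2, goal3, part4⟩
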